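/- Let G, K, p, q be positive integers with p ≤ G − 1 and q ≤ (G − p)·K, let C be a real number, and let d : Fin G × Fin K → ℝ be a nonnegative family (d(i,j) is indexed by a 'cell' i and a 'user' j). Suppose that for every subset B ⊆ Fin G with |B| = p and every subset U of {(g,h) ∈ Fin G × Fin K : g ∉ B} with |U| = q, one has ∑_{i∈B} ∑_{j∈Fin K} d(i,j) + ∑_{(g,h)∈U} d(g,h) ≤ C. Then ∑_{i∈Fin G} ∑_{j∈Fin K} d(i,j) ≤ (G·K / (K·p + q)) · C. -/

import Mathlib

open Finset

lemma aux_count_mem {α : Type*} [DecidableEq α] (s : Finset α) (k : ℕ) (hk : 0 < k)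
    (i : α) (hi : i ∈ s) :
    ((s.powersetCard k).filter (fun B => i ∈ B)).card = Nat.choose (s.card - 1) (k - 1) := by
  rw [← Finset.card_erase_of_mem hi, ← Finset.card_powersetCard]
  apply Finset.card_bij (fun B _ => B.erase i)
  · intro B hB
    simp only [mem_filter, mem_powersetCard] at hB
    rw [mem_powersetCard]
    exact ⟨(Finset.erase_subset_erase i hB.1.1), by rw [Finset.card_erase_of_mem hB.2, hB.1.2]⟩
  · intro B hB B' hB' h
    simp only [mem_filter] at hB hB'
    rw [← Finset.insert_erase hB.2, ← Finset.insert_erase hB'.2, h]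
  · intro B hB
    rw [mem_powersetCard] at hB
    refine ⟨insert i B, ?_, ?_⟩
    · simp only [mem_filter, mem_powersetCard, Finset.mem_insert_self, and_true]
      constructor
      · exact Finset.insert_subset hi (hB.1.trans (Finset.erase_subset ..))
      · rw [Finset.card_insert_of_notMem (fun h => (Finset.mem_erase.mp (hB.1 h)).1 rfl), hB.2]
        omega
    · exact (Finset.erase_insert (fun h => (Finset.mem_erase.mp (hB.1 h)).1 rfl))

lemma aux_sum_sum {α : Type*} [DecidableEq α] (s : Finset α) (k : ℕ) (hk : 0 < k) (f : α → ℝ) :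
    ∑ B ∈ s.powersetCard k, ∑ i ∈ B, f i
      = (Nat.choose (s.card - 1) (k - 1) : ℝ) * ∑ i ∈ s, f i := by
  have : ∀ B ∈ s.powersetCard k, ∑ i ∈ B, f i = ∑ i ∈ s, if i ∈ B then f i else 0 := by
    intro B hB
    rw [mem_powersetCard] at hB
    rw [Finset.sum_ite_mem, Finset.inter_eq_right.mpr hB.1]
  rw [Finset.sum_congr rfl this, Finset.sum_comm, Finset.mul_sum]
  refine Finset.sum_congr rfl fun i hi => ?_
  rw [Finset.sum_ite, Finset.sum_const, Finset.sum_const_zero, add_zero,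
    aux_count_mem s k hk i hi, nsmul_eq_mul]

theorem stmt_0 (G K p q : ℕ) (hG : 0 < G) (hK : 0 < K) (hp : 0 < p) (hq : 0 < q)
    (hpG : p ≤ G - 1) (hqK : q ≤ (G - p) * K)
    (C : ℝ) (d : Fin G × Fin K → ℝ) (hd : ∀ x, 0 ≤ d x)
    (hbound : ∀ B : Finset (Fin G), B.card = p →
      ∀ U : Finset (Fin G × Fin K), (∀ x ∈ U, x.1 ∉ B) → U.card = q →
        (∑ i ∈ B, ∑ j : Fin K, d (i, j)) + (∑ x ∈ U, d x) ≤ C) :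
    (∑ i : Fin G, ∑ j : Fin K, d (i, j)) ≤ ((G : ℝ) * K / ((K : ℝ) * p + q)) * C := by
  have hpG' : p ≤ G := by omega
  set M : ℕ := (G - p) * K with hMdef
  have hM : 0 < M := by omega
  set r : Fin G → ℝ := fun i => ∑ j : Fin K, d (i, j) with hr
  set S : ℝ := ∑ i : Fin G, r i with hS
  have hSpr : ∑ x : Fin G × Fin K, d x = S := by
    rw [hS, hr, Fintype.sum_prod_type]
  set Cgp : ℕ := Nat.choose G p with hCgp
  set Cg1 : ℕ := Nat.choose (G - 1) (p - 1) with hCg1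
  set CMq : ℕ := Nat.choose M q with hCMq
  set CM1 : ℕ := Nat.choose (M - 1) (q - 1) with hCM1
  -- Step 1: for each B of card p
  have step1 : ∀ B : Finset (Fin G), B.card = p →
      (CMq : ℝ) * (∑ i ∈ B, r i) + (CM1 : ℝ) * (S - ∑ i ∈ B, r i) ≤ (CMq : ℝ) * C := by
    intro B hB
    set P : Finset (Fin G × Fin K) := Bᶜ ×ˢ (univ : Finset (Fin K)) with hP
    have hPcard : P.card = M := by
      rw [hP, Finset.card_product, Finset.card_compl, hB, Finset.card_univ, Fintype.card_fin,
        Fintype.card_fin]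
    have hTB : ∑ x ∈ P, d x = S - ∑ i ∈ B, r i := by
      have hdisj : Disjoint (B ×ˢ (univ : Finset (Fin K))) P := by
        rw [hP]
        exact Finset.disjoint_product.mpr (Or.inl (disjoint_compl_right))
      have hun : B ×ˢ (univ : Finset (Fin K)) ∪ P = univ := by
        rw [hP, ← Finset.union_product, Finset.union_compl, Finset.univ_product_univ]
      have := Finset.sum_union (f := d) hdisj
      rw [hun, hSpr] at this
      have hBsum : ∑ x ∈ B ×ˢ (univ : Finset (Fin K)), d x = ∑ i ∈ B, r i := by
        rw [Finset.sum_product]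
      linarith [this, hBsum]
    have hsum : ∑ U ∈ P.powersetCard q, ((∑ i ∈ B, r i) + ∑ x ∈ U, d x)
        ≤ ∑ _U ∈ P.powersetCard q, C := by
      refine Finset.sum_le_sum fun U hU => ?_
      rw [mem_powersetCard] at hU
      refine hbound B hB U (fun x hx => ?_) hU.2
      have := hU.1 hx
      rw [hP, Finset.mem_product] at this
      exact Finset.mem_compl.mp this.1
    rw [Finset.sum_add_distrib, Finset.sum_const, Finset.sum_const,
      aux_sum_sum P q hq d, Finset.card_powersetCard, hPcard, hTB, nsmul_eq_mul,
      nsmul_eq_mul] at hsum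
    exact hsum
  -- Step 2: sum over all B
  have step2 : (CMq : ℝ) * ((Cg1 : ℝ) * S) + (CM1 : ℝ) * ((Cgp : ℝ) * S - (Cg1 : ℝ) * S)
      ≤ (Cgp : ℝ) * ((CMq : ℝ) * C) := by
    have hsum : ∑ B ∈ (univ : Finset (Fin G)).powersetCard p,
        ((CMq : ℝ) * (∑ i ∈ B, r i) + (CM1 : ℝ) * (S - ∑ i ∈ B, r i))
        ≤ ∑ _B ∈ (univ : Finset (Fin G)).powersetCard p, (CMq : ℝ) * C :=
      Finset.sum_le_sum fun B hB => step1 B (Finset.mem_powersetCard.mp hB).2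
    have hBB : ∑ B ∈ (univ : Finset (Fin G)).powersetCard p, ∑ i ∈ B, r i
        = (Cg1 : ℝ) * S := by
      rw [aux_sum_sum (univ : Finset (Fin G)) p hp r, Finset.card_univ, Fintype.card_fin, hS]
    have hcard : ((univ : Finset (Fin G)).powersetCard p).card = Cgp := by
      rw [Finset.card_powersetCard, Finset.card_univ, Fintype.card_fin]
    rw [Finset.sum_add_distrib, ← Finset.mul_sum, hBB, ← Finset.mul_sum,
      Finset.sum_sub_distrib, hBB, Finset.sum_const, Finset.sum_const, hcard, nsmul_eq_mul,
      nsmul_eq_mul, mul_sub] at hsum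
    rw [mul_sub]
    linarith [hsum]
  -- Binomial identities
  have e1n : G * Cg1 = Cgp * p := by
    have h := Nat.add_one_mul_choose_eq (G - 1) (p - 1)
    have h1 : G - 1 + 1 = G := by omega
    have h2 : p - 1 + 1 = p := by omega
    rw [h1, h2] at h
    rw [hCg1, hCgp]
    omega
  have e2n : M * CM1 = CMq * q := by
    have h := Nat.add_one_mul_choose_eq (M - 1) (q - 1)
    have h1 : M - 1 + 1 = M := by omega
    have h2 : q - 1 + 1 = q := by omega
    rw [h1, h2] at h
    rw [hCM1, hCMq]
    omega
  have e1 : (G : ℝ) * Cg1 = (Cgp : ℝ) * p := by exact_mod_cast e1n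
  have e2 : ((G : ℝ) - p) * K * CM1 = (CMq : ℝ) * q := by
    have : (M : ℝ) = ((G : ℝ) - p) * K := by
      rw [hMdef]; push_cast [Nat.cast_sub hpG']; ring
    rw [← this]; exact_mod_cast e2n
  have hCgp_pos : (0 : ℝ) < Cgp := by
    exact_mod_cast Nat.choose_pos hpG'
  have hCMq_pos : (0 : ℝ) < CMq := by
    exact_mod_cast Nat.choose_pos hqK
  -- Coefficient identity
  have hco : (G : ℝ) * K * ((CMq : ℝ) * (Cg1 : ℝ) + (CM1 : ℝ) * ((Cgp : ℝ) - (Cg1 : ℝ)))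
      = ((K : ℝ) * p + q) * ((Cgp : ℝ) * CMq) := by
    linear_combination ((K : ℝ) * CMq - (K : ℝ) * CM1) * e1 + (Cgp : ℝ) * e2
  -- Combine
  have hGK : (0 : ℝ) < (G : ℝ) * K := by positivity
  have key : ((K : ℝ) * p + q) * ((Cgp : ℝ) * CMq) * S
      ≤ (G : ℝ) * K * ((Cgp : ℝ) * CMq) * C := by
    have := mul_le_mul_of_nonneg_left step2 (le_of_lt hGK)
    calc ((K : ℝ) * p + q) * ((Cgp : ℝ) * CMq) * S
        = (G : ℝ) * K * ((CMq : ℝ) * (Cg1 : ℝ) + (CM1 : ℝ) * ((Cgp : ℝ) - (Cg1 : ℝ))) * S := by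
          rw [hco]
      _ ≤ (G : ℝ) * K * ((Cgp : ℝ) * CMq) * C := by nlinarith [this]
  have hKpq : (0 : ℝ) < (K : ℝ) * p + q := by positivity
  have final : ((K : ℝ) * p + q) * S ≤ (G : ℝ) * K * C := by
    have hpos : (0 : ℝ) < (Cgp : ℝ) * CMq := by positivity
    have key2 : ((K : ℝ) * p + q) * S * ((Cgp : ℝ) * CMq)
        ≤ (G : ℝ) * K * C * ((Cgp : ℝ) * CMq) := by nlinarith [key]
    exact le_of_mul_le_mul_right key2 hpos
  rw [div_mul_eq_mul_div, le_div_iff₀ hKpq]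
  linarith [final]
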